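/- arXiv:2510.04403 — 2 statements merged into one kernel-verified Lean document; each statement's English description precedes it below -/
import Mathlib

section
/- In the braid group B_5, let γ be the braid word [1,2,3,4,4,3,2,3,2,4,2,1,1,1,2,1,3,2,1,3,2,3,4,3,2,4,1,3,2,4,3,4,4,3,2,4,1,3,2,4,3,4,4,3,2,4,3,4] and let α = [-2,-4,-4,-4,-3,-2,-4,-3] (where negative entries denote inverses of generators). Then α⁻¹·γ·α equals the braid word [(1,2,3,4)^10, 2,-4,2,1,3,2,3,3,3,3]. -/
/-- The Artin braid relations on `n` generators (so this presents the braid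
group on `n + 1` strands); generator `i : Fin n` corresponds to `σ_{i+1}`. -/
def braidRels (n : ℕ) : Set (FreeGroup (Fin n)) :=
  { r | (∃ i j : Fin n, (i : ℕ) + 1 = j ∧
          r = FreeGroup.of i * FreeGroup.of j * FreeGroup.of i *
              (FreeGroup.of j * FreeGroup.of i * FreeGroup.of j)⁻¹) ∨
        (∃ i j : Fin n, (i : ℕ) + 2 ≤ (j : ℕ) ∧
          r = FreeGroup.of i * FreeGroup.of j * (FreeGroup.of j * FreeGroup.of i)⁻¹) }

/-- The braid group on `n + 1` strands, with `n` Artin generators. -/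
def BraidGroup (n : ℕ) : Type := PresentedGroup (braidRels n)

instance (n : ℕ) : Group (BraidGroup n) :=
  inferInstanceAs (Group (PresentedGroup (braidRels n)))

/-- The Artin generator `σ_{i+1}` of the braid group on `n + 1` strands. -/
def braidGen {n : ℕ} (i : Fin n) : BraidGroup n := PresentedGroup.of i

/-- The letter of a braid word: a nonzero integer `a` denotes
`σ_{|a|}^{sign a}`. (Out-of-range letters give `1`.) -/
noncomputable def braidLetter (n : ℕ) (a : ℤ) : BraidGroup n :=
  if h : a.natAbs - 1 < n then
    (braidGen (⟨a.natAbs - 1, h⟩ : Fin n)) ^ (if 0 < a then (1 : ℤ) else -1)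
  else 1

/-- The element of the braid group represented by a braid word. -/
noncomputable def braidWord (n : ℕ) (w : List ℤ) : BraidGroup n :=
  (w.map (braidLetter n)).prod


-- relator is 1
lemma braid_rel_one {n : ℕ} {r : FreeGroup (Fin n)} (h : r ∈ braidRels n) :
    (PresentedGroup.mk (braidRels n) r) = 1 := by
  have : r ∈ Subgroup.normalClosure (braidRels n) := Subgroup.subset_normalClosure h
  exact (QuotientGroup.eq_one_iff r).mpr this

lemma braid_adj {n : ℕ} (i j : Fin n) (hij : (i : ℕ) + 1 = j) :
    braidGen i * braidGen j * braidGen i = braidGen j * braidGen i * braidGen j := by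
  have h : (FreeGroup.of i * FreeGroup.of j * FreeGroup.of i *
      (FreeGroup.of j * FreeGroup.of i * FreeGroup.of j)⁻¹) ∈ braidRels n :=
    Or.inl ⟨i, j, hij, rfl⟩
  have := braid_rel_one h
  simp only [map_mul, map_inv] at this
  have := mul_inv_eq_one.mp this
  exact this

lemma braid_comm {n : ℕ} (i j : Fin n) (hij : (i : ℕ) + 2 ≤ (j : ℕ)) :
    braidGen i * braidGen j = braidGen j * braidGen i := by
  have h : (FreeGroup.of i * FreeGroup.of j * (FreeGroup.of j * FreeGroup.of i)⁻¹) ∈ braidRels n :=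
    Or.inr ⟨i, j, hij, rfl⟩
  have := braid_rel_one h
  simp only [map_mul, map_inv] at this
  exact mul_inv_eq_one.mp this

noncomputable abbrev g1 : BraidGroup 4 := braidGen (0 : Fin 4)
noncomputable abbrev g2 : BraidGroup 4 := braidGen (1 : Fin 4)
noncomputable abbrev g3 : BraidGroup 4 := braidGen (2 : Fin 4)
noncomputable abbrev g4 : BraidGroup 4 := braidGen (3 : Fin 4)

lemma bw_nil : braidWord 4 [] = 1 := rfl

lemma bl1 : braidLetter 4 1 = g1 := by simp [braidLetter]
lemma bl2 : braidLetter 4 2 = g2 := by simp [braidLetter]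
lemma bl3 : braidLetter 4 3 = g3 := by simp [braidLetter]
lemma bl4 : braidLetter 4 4 = g4 := by simp [braidLetter]
lemma bl1' : braidLetter 4 (-1) = g1⁻¹ := by simp [braidLetter]
lemma bl2' : braidLetter 4 (-2) = g2⁻¹ := by simp [braidLetter]
lemma bl3' : braidLetter 4 (-3) = g3⁻¹ := by simp [braidLetter]
lemma bl4' : braidLetter 4 (-4) = g4⁻¹ := by simp [braidLetter]

lemma bw_append (u v : List ℤ) : braidWord 4 (u ++ v) = braidWord 4 u * braidWord 4 v := by
  simp [braidWord]

lemma step (m m' u v : List ℤ) (h : braidWord 4 m = braidWord 4 m') :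
    braidWord 4 (u ++ (m ++ v)) = braidWord 4 (u ++ (m' ++ v)) := by
  rw [bw_append, bw_append, bw_append, bw_append, h]

section
variable {G : Type*} [Group G] (x y : G)

lemma A0 (h : x*y*x = y*x*y) : x*(y*x) = y*(x*y) := by
  rw [← mul_assoc, h, mul_assoc]
lemma A1 (h : x*y*x = y*x*y) : x⁻¹*(y*x) = y*(x*y⁻¹) := by
  calc x⁻¹*(y*x) = x⁻¹*(y*x*y)*y⁻¹ := by group
    _ = x⁻¹*(x*y*x)*y⁻¹ := by rw [h]
    _ = y*(x*y⁻¹) := by group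
lemma A3 (h : x*y*x = y*x*y) : x*(y*x⁻¹) = y⁻¹*(x*y) := by
  calc x*(y*x⁻¹) = y⁻¹*(y*x*y)*(y⁻¹*(y*x⁻¹)) := by group
    _ = y⁻¹*(x*y*x)*(y⁻¹*(y*x⁻¹)) := by rw [h]
    _ = y⁻¹*(x*y) := by group
lemma A2 (h : x*y*x = y*x*y) : x⁻¹*(y⁻¹*x) = y*(x⁻¹*y⁻¹) := by
  have := A1 x y h
  calc x⁻¹*(y⁻¹*x) = (x⁻¹*(y*x))⁻¹*(x⁻¹*x) := by group
    _ = (y*(x*y⁻¹))⁻¹*(x⁻¹*x) := by rw [this]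
    _ = y*(x⁻¹*y⁻¹) := by group
lemma A4 (h : x*y*x = y*x*y) : x*(y⁻¹*x⁻¹) = y⁻¹*(x⁻¹*y) := by
  have := A3 x y h
  calc x*(y⁻¹*x⁻¹) = (x*(y*x⁻¹))⁻¹*(x*x⁻¹) := by group
    _ = (y⁻¹*(x*y))⁻¹*(x*x⁻¹) := by rw [this]
    _ = y⁻¹*(x⁻¹*y) := by group
lemma A5 (h : x*y*x = y*x*y) : x⁻¹*(y⁻¹*x⁻¹) = y⁻¹*(x⁻¹*y⁻¹) := by
  calc x⁻¹*(y⁻¹*x⁻¹) = (x*y*x)⁻¹ := by group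
    _ = (y*x*y)⁻¹ := by rw [h]
    _ = y⁻¹*(x⁻¹*y⁻¹) := by group

lemma C1 (c : x*y = y*x) : x*y⁻¹ = y⁻¹*x := (Commute.inv_right c).eq
lemma C2 (c : x*y = y*x) : x⁻¹*y = y*x⁻¹ := (Commute.inv_left c).eq
lemma C3 (c : x*y = y*x) : x⁻¹*y⁻¹ = y⁻¹*x⁻¹ := ((Commute.inv_left c).inv_right).eq
end

lemma h12 : g1*g2*g1 = g2*g1*g2 := braid_adj 0 1 rfl
lemma h23 : g2*g3*g2 = g3*g2*g3 := braid_adj 1 2 rfl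
lemma h34 : g3*g4*g3 = g4*g3*g4 := braid_adj 2 3 rfl
lemma h13 : g1*g3 = g3*g1 := braid_comm 0 2 (by decide)
lemma h14 : g1*g4 = g4*g1 := braid_comm 0 3 (by decide)
lemma h24 : g2*g4 = g4*g2 := braid_comm 1 3 (by decide)
lemma r12_0 : braidWord 4 [1, 2, 1] = braidWord 4 [2, 1, 2] := by
  simp [braidWord, bl1, bl2, bl3, bl4, bl1', bl2', bl3', bl4']; exact A0 _ _ h12
lemma r12_1 : braidWord 4 [-1, 2, 1] = braidWord 4 [2, 1, -2] := by
  simp [braidWord, bl1, bl2, bl3, bl4, bl1', bl2', bl3', bl4']; exact A1 _ _ h12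
lemma r12_2 : braidWord 4 [-1, -2, 1] = braidWord 4 [2, -1, -2] := by
  simp [braidWord, bl1, bl2, bl3, bl4, bl1', bl2', bl3', bl4']; exact A2 _ _ h12
lemma r12_3 : braidWord 4 [1, 2, -1] = braidWord 4 [-2, 1, 2] := by
  simp [braidWord, bl1, bl2, bl3, bl4, bl1', bl2', bl3', bl4']; exact A3 _ _ h12
lemma r12_4 : braidWord 4 [1, -2, -1] = braidWord 4 [-2, -1, 2] := by
  simp [braidWord, bl1, bl2, bl3, bl4, bl1', bl2', bl3', bl4']; exact A4 _ _ h12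
lemma r12_5 : braidWord 4 [-1, -2, -1] = braidWord 4 [-2, -1, -2] := by
  simp [braidWord, bl1, bl2, bl3, bl4, bl1', bl2', bl3', bl4']; exact A5 _ _ h12
lemma r23_0 : braidWord 4 [2, 3, 2] = braidWord 4 [3, 2, 3] := by
  simp [braidWord, bl1, bl2, bl3, bl4, bl1', bl2', bl3', bl4']; exact A0 _ _ h23
lemma r23_1 : braidWord 4 [-2, 3, 2] = braidWord 4 [3, 2, -3] := by
  simp [braidWord, bl1, bl2, bl3, bl4, bl1', bl2', bl3', bl4']; exact A1 _ _ h23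
lemma r23_2 : braidWord 4 [-2, -3, 2] = braidWord 4 [3, -2, -3] := by
  simp [braidWord, bl1, bl2, bl3, bl4, bl1', bl2', bl3', bl4']; exact A2 _ _ h23
lemma r23_3 : braidWord 4 [2, 3, -2] = braidWord 4 [-3, 2, 3] := by
  simp [braidWord, bl1, bl2, bl3, bl4, bl1', bl2', bl3', bl4']; exact A3 _ _ h23
lemma r23_4 : braidWord 4 [2, -3, -2] = braidWord 4 [-3, -2, 3] := by
  simp [braidWord, bl1, bl2, bl3, bl4, bl1', bl2', bl3', bl4']; exact A4 _ _ h23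
lemma r23_5 : braidWord 4 [-2, -3, -2] = braidWord 4 [-3, -2, -3] := by
  simp [braidWord, bl1, bl2, bl3, bl4, bl1', bl2', bl3', bl4']; exact A5 _ _ h23
lemma r34_0 : braidWord 4 [3, 4, 3] = braidWord 4 [4, 3, 4] := by
  simp [braidWord, bl1, bl2, bl3, bl4, bl1', bl2', bl3', bl4']; exact A0 _ _ h34
lemma r34_1 : braidWord 4 [-3, 4, 3] = braidWord 4 [4, 3, -4] := by
  simp [braidWord, bl1, bl2, bl3, bl4, bl1', bl2', bl3', bl4']; exact A1 _ _ h34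
lemma r34_2 : braidWord 4 [-3, -4, 3] = braidWord 4 [4, -3, -4] := by
  simp [braidWord, bl1, bl2, bl3, bl4, bl1', bl2', bl3', bl4']; exact A2 _ _ h34
lemma r34_3 : braidWord 4 [3, 4, -3] = braidWord 4 [-4, 3, 4] := by
  simp [braidWord, bl1, bl2, bl3, bl4, bl1', bl2', bl3', bl4']; exact A3 _ _ h34
lemma r34_4 : braidWord 4 [3, -4, -3] = braidWord 4 [-4, -3, 4] := by
  simp [braidWord, bl1, bl2, bl3, bl4, bl1', bl2', bl3', bl4']; exact A4 _ _ h34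
lemma r34_5 : braidWord 4 [-3, -4, -3] = braidWord 4 [-4, -3, -4] := by
  simp [braidWord, bl1, bl2, bl3, bl4, bl1', bl2', bl3', bl4']; exact A5 _ _ h34
lemma c13_0 : braidWord 4 [1, 3] = braidWord 4 [3, 1] := by
  simp [braidWord, bl1, bl2, bl3, bl4, bl1', bl2', bl3', bl4']; exact h13
lemma c13_1 : braidWord 4 [1, -3] = braidWord 4 [-3, 1] := by
  simp [braidWord, bl1, bl2, bl3, bl4, bl1', bl2', bl3', bl4']; exact C1 _ _ h13
lemma c13_2 : braidWord 4 [-1, 3] = braidWord 4 [3, -1] := by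
  simp [braidWord, bl1, bl2, bl3, bl4, bl1', bl2', bl3', bl4']; exact C2 _ _ h13
lemma c13_3 : braidWord 4 [-1, -3] = braidWord 4 [-3, -1] := by
  simp [braidWord, bl1, bl2, bl3, bl4, bl1', bl2', bl3', bl4']; exact C3 _ _ h13
lemma c14_0 : braidWord 4 [1, 4] = braidWord 4 [4, 1] := by
  simp [braidWord, bl1, bl2, bl3, bl4, bl1', bl2', bl3', bl4']; exact h14
lemma c14_1 : braidWord 4 [1, -4] = braidWord 4 [-4, 1] := by
  simp [braidWord, bl1, bl2, bl3, bl4, bl1', bl2', bl3', bl4']; exact C1 _ _ h14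
lemma c14_2 : braidWord 4 [-1, 4] = braidWord 4 [4, -1] := by
  simp [braidWord, bl1, bl2, bl3, bl4, bl1', bl2', bl3', bl4']; exact C2 _ _ h14
lemma c14_3 : braidWord 4 [-1, -4] = braidWord 4 [-4, -1] := by
  simp [braidWord, bl1, bl2, bl3, bl4, bl1', bl2', bl3', bl4']; exact C3 _ _ h14
lemma c24_0 : braidWord 4 [2, 4] = braidWord 4 [4, 2] := by
  simp [braidWord, bl1, bl2, bl3, bl4, bl1', bl2', bl3', bl4']; exact h24
lemma c24_1 : braidWord 4 [2, -4] = braidWord 4 [-4, 2] := by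
  simp [braidWord, bl1, bl2, bl3, bl4, bl1', bl2', bl3', bl4']; exact C1 _ _ h24
lemma c24_2 : braidWord 4 [-2, 4] = braidWord 4 [4, -2] := by
  simp [braidWord, bl1, bl2, bl3, bl4, bl1', bl2', bl3', bl4']; exact C2 _ _ h24
lemma c24_3 : braidWord 4 [-2, -4] = braidWord 4 [-4, -2] := by
  simp [braidWord, bl1, bl2, bl3, bl4, bl1', bl2', bl3', bl4']; exact C3 _ _ h24
lemma cn1 : braidWord 4 [1, -1] = braidWord 4 [] := by
  simp [braidWord, bl1, bl2, bl3, bl4, bl1', bl2', bl3', bl4']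
lemma cn2 : braidWord 4 [2, -2] = braidWord 4 [] := by
  simp [braidWord, bl1, bl2, bl3, bl4, bl1', bl2', bl3', bl4']
lemma cn3 : braidWord 4 [3, -3] = braidWord 4 [] := by
  simp [braidWord, bl1, bl2, bl3, bl4, bl1', bl2', bl3', bl4']
lemma cn4 : braidWord 4 [4, -4] = braidWord 4 [] := by
  simp [braidWord, bl1, bl2, bl3, bl4, bl1', bl2', bl3', bl4']
lemma cnm1 : braidWord 4 [-1, 1] = braidWord 4 [] := by
  simp [braidWord, bl1, bl2, bl3, bl4, bl1', bl2', bl3', bl4']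
lemma cnm2 : braidWord 4 [-2, 2] = braidWord 4 [] := by
  simp [braidWord, bl1, bl2, bl3, bl4, bl1', bl2', bl3', bl4']
lemma cnm3 : braidWord 4 [-3, 3] = braidWord 4 [] := by
  simp [braidWord, bl1, bl2, bl3, bl4, bl1', bl2', bl3', bl4']
lemma cnm4 : braidWord 4 [-4, 4] = braidWord 4 [] := by
  simp [braidWord, bl1, bl2, bl3, bl4, bl1', bl2', bl3', bl4']

def rules : List (List ℤ × List ℤ) := [
  ([], [-4, 4]),
  ([], [-3, 3]),
  ([], [-2, 2]),
  ([], [3, -3]),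
  ([], [4, -4]),
  ([-4, -3, 4], [3, -4, -3]),
  ([-4, 4], []),
  ([-3, -2, 3], [2, -3, -2]),
  ([-3, 3], []),
  ([-2, -4], [-4, -2]),
  ([-2, 2], []),
  ([-2, 4], [4, -2]),
  ([1, -4], [-4, 1]),
  ([1, -3], [-3, 1]),
  ([1, -1], []),
  ([1, 3], [3, 1]),
  ([1, 4], [4, 1]),
  ([2, -4], [-4, 2]),
  ([2, -2], []),
  ([2, 1, -2], [-1, 2, 1]),
  ([2, 1, 2], [1, 2, 1]),
  ([2, 4], [4, 2]),
  ([3, -3], []),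
  ([3, -1], [-1, 3]),
  ([3, 1], [1, 3]),
  ([3, 2, -3], [-2, 3, 2]),
  ([3, 2, 3], [2, 3, 2]),
  ([4, -4], []),
  ([4, -2], [-2, 4]),
  ([4, -1], [-1, 4]),
  ([4, 1], [1, 4]),
  ([4, 2], [2, 4]),
  ([4, 3, -4], [-3, 4, 3]),
  ([4, 3, 4], [3, 4, 3])
]

lemma rules_sound : ∀ r ∈ rules, braidWord 4 r.1 = braidWord 4 r.2 := by
  intro r hr
  simp only [rules, List.mem_cons, List.not_mem_nil, or_false] at hr
  rcases hr with rfl|rfl|rfl|rfl|rfl|rfl|rfl|rfl|rfl|rfl|rfl|rfl|rfl|rfl|rfl|rfl|rfl|rfl|rfl|rfl|rfl|rfl|rfl|rfl|rfl|rfl|rfl|rfl|rfl|rfl|rfl|rfl|rfl|rfl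
  · exact cnm4.symm
  · exact cnm3.symm
  · exact cnm2.symm
  · exact cn3.symm
  · exact cn4.symm
  · exact r34_4.symm
  · exact cnm4
  · exact r23_4.symm
  · exact cnm3
  · exact c24_3
  · exact cnm2
  · exact c24_2
  · exact c14_1
  · exact c13_1
  · exact cn1
  · exact c13_0
  · exact c14_0
  · exact c24_1
  · exact cn2
  · exact r12_1.symm
  · exact r12_0.symm
  · exact c24_0
  · exact cn3
  · exact c13_2.symm
  · exact c13_0.symm
  · exact r23_1.symm
  · exact r23_0.symm
  · exact cn4
  · exact c24_2.symm
  · exact c14_2.symm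
  · exact c14_0.symm
  · exact c24_0.symm
  · exact r34_1.symm
  · exact r34_0.symm

def applyRule (w : List ℤ) (p i : ℕ) : Option (List ℤ) :=
  match rules[i]? with
  | none => none
  | some (l, r) =>
    if (w.drop p).take l.length = l then
      some (w.take p ++ (r ++ (w.drop p).drop l.length))
    else none

lemma applyRule_sound {w w' : List ℤ} {p i : ℕ} (h : applyRule w p i = some w') :
    braidWord 4 w = braidWord 4 w' := by
  unfold applyRule at h
  cases hg : rules[i]? with
  | none => rw [hg] at h; exact absurd h (by simp)
  | some lr =>
    obtain ⟨l, r⟩ := lr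
    rw [hg] at h
    dsimp only at h
    by_cases hc : (w.drop p).take l.length = l
    · rw [if_pos hc] at h
      injection h with h'
      rw [← h']
      have hr : braidWord 4 l = braidWord 4 r := rules_sound _ (List.mem_of_getElem? hg)
      have hw : w = w.take p ++ (l ++ (w.drop p).drop l.length) := by
        conv_lhs => rw [← List.take_append_drop p w]
        congr 1
        conv_lhs => rw [← List.take_append_drop l.length (w.drop p)]
        rw [hc]
      conv_lhs => rw [hw]
      exact step l r _ _ hr
    · rw [if_neg hc] at h; exact absurd h (by simp)

def run (w : List ℤ) : List (ℕ × ℕ) → Option (List ℤ)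
  | [] => some w
  | m :: ms =>
    match applyRule w m.1 m.2 with
    | some w' => run w' ms
    | none => none

lemma run_sound : ∀ (ms : List (ℕ × ℕ)) {w w' : List ℤ}, run w ms = some w' →
    braidWord 4 w = braidWord 4 w'
  | [], w, w', h => by
      simp only [run] at h; injection h with h'; rw [h']
  | m :: ms, w, w', h => by
      simp only [run] at h
      cases ha : applyRule w m.1 m.2 with
      | none => rw [ha] at h; exact absurd h (by simp)
      | some w'' =>
        rw [ha] at h
        exact (applyRule_sound ha).trans (run_sound ms h)

def moves1 : List (ℕ × ℕ) := [(47, 28), (48, 27), (62, 28), (63, 27), (44, 21), (45, 1), (46, 26), (48, 18), (43, 0), (44, 33), (46, 22), (42, 27), (45, 0), (46, 32), (48, 0), (49, 32), (51, 22), (47, 27), (43, 31), (44, 27), (46, 28), (47, 27), (43, 1), (44, 25), (46, 1), (47, 25), (49, 18), (42, 22), (43, 22), (44, 22), (38, 21), (39, 1), (40, 26), (42, 21), (43, 18), (37, 0), (38, 33), (40, 22), (35, 30), (36, 27), (38, 1), (39, 26), (41, 21), (42, 18), (36, 0), (37, 33), (39, 22), (40, 0), (41, 33), (43, 22), (38,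 31), (39, 27), (39, 0), (40, 33), (42, 22), (40, 0), (41, 33), (43, 22), (41, 0), (42, 33), (44, 22), (38, 17), (39, 17), (40, 17), (41, 1), (42, 26), (44, 21), (45, 18), (43, 0), (44, 33), (46, 22), (37, 0), (38, 32), (40, 0), (41, 32), (43, 0), (44, 32), (46, 22), (39, 27), (40, 27), (41, 31), (42, 27), (35, 12), (36, 12), (37, 13), (38, 13), (39, 13), (40, 2), (41, 20), (43, 15), (44, 16), (45, 14), (42, 1), (43, 26), (45, 21), (46, 18), (43, 1), (44, 26), (46, 21), (47, 18), (45, 0), (46, 33), (48, 22), (47, 28), (48, 29), (49, 27), (44, 17), (45, 1), (46, 26), (48, 18), (47, 23), (48, 22), (34, 17), (35, 17), (36, 1), (37, 25), (39, 1), (40, 25), (42, 1), (43, 25), (45, 18), (38, 22), (39, 22), (40, 24), (41, 22), (33, 0), (34, 32), (36, 0), (37, 32), (39, 22), (32, 27), (33, 27), (30, 0), (31, 33), (33, 22), (29, 27), (29, 0), (30, 33), (32, 22), (28, 17), (29, 1), (30, 26), (32, 21), (33, 21), (34, 18), (27, 0), (28, 32), (30, 22), (25, 30), (26, 27), (28,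 1), (29, 26), (31, 21), (32, 21), (33, 18), (29, 1), (30, 26), (32, 21), (33, 21), (34, 18), (31, 0), (32, 33), (34, 0), (35, 33), (37, 24), (38, 22), (33, 27), (34, 30), (35, 27), (33, 24), (34, 22), (33, 2), (34, 20), (36, 14), (35, 18), (34, 14), (30, 17), (31, 1), (32, 26), (34, 18), (33, 0), (34, 32), (36, 22), (35, 28), (36, 29), (37, 27), (32, 17), (33, 1), (34, 25), (36, 18), (35, 23), (36, 22), (25, 13), (26, 16), (27, 13), (28, 13), (29, 12), (30, 13), (31, 12), (32, 13), (33, 2), (34, 19), (36, 14), (35, 18), (24, 1), (25, 25), (27, 21), (28, 1), (29, 25), (31, 1), (32, 25), (34, 17), (35, 1), (36, 25), (38, 17), (39, 1), (40, 25), (42, 18), (23, 22), (28, 22), (24, 0), (25, 33), (27, 22), (22, 28), (23, 27), (20, 1), (21, 26), (23, 18), (19, 22), (25, 0), (26, 32), (28, 22), (29, 0), (30, 32), (32, 22), (27, 28), (28, 27), (22, 28), (23, 28), (24, 27), (19, 1), (20, 26), (22, 1), (23, 26), (25, 18), (21, 22), (21, 1), (22, 26), (24, 18), (23, 22), (22,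 18), (20, 1), (21, 25), (23, 1), (24, 25), (26, 21), (27, 18), (22, 22), (25, 23), (26, 23), (27, 0), (28, 32), (30, 22), (24, 29), (25, 29), (26, 27), (23, 23), (24, 23), (25, 22), (25, 28), (26, 29), (27, 27), (18, 13), (19, 13), (20, 2), (21, 19), (23, 2), (24, 19), (26, 14), (22, 18), (17, 1), (18, 25), (20, 1), (21, 25), (23, 18), (16, 22), (17, 22), (15, 2), (16, 19), (18, 2), (19, 19), (21, 15), (22, 14), (14, 18), (13, 14), (13, 18), (12, 14), (11, 2), (12, 20), (14, 15), (15, 14), (10, 18), (10, 2), (11, 20), (13, 15), (14, 2), (15, 20), (17, 14), (16, 18), (15, 14), (8, 21), (9, 18), (10, 1), (11, 26), (13, 18), (12, 22), (11, 18), (9, 13), (10, 14), (7, 0), (8, 33), (10, 22), (9, 27), (8, 22), (6, 17), (7, 18), (5, 0), (6, 32), (8, 23), (9, 0), (10, 32), (12, 22), (4, 27), (2, 0), (3, 33), (5, 22), (5, 29), (6, 27), (3, 0), (4, 33), (6, 23), (7, 22), (7, 28), (8, 29), (9, 27), (0, 2), (1, 20), (3, 12), (4, 12), (5, 15), (6,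 16), (7, 14), (2, 17), (3, 17), (4, 1), (5, 26), (7, 21), (8, 18), (6, 0), (7, 33), (9, 23), (10, 22), (8, 29), (9, 28), (10, 29), (11, 27), (1, 12), (2, 12), (3, 13), (4, 2), (5, 20), (7, 12), (8, 15), (9, 14), (6, 17), (7, 1), (8, 26), (10, 18), (9, 23), (10, 22), (5, 12), (6, 13), (7, 2), (8, 20), (10, 14), (9, 18), (8, 14), (7, 3), (8, 7), (10, 11), (11, 10), (6, 8), (4, 9), (5, 10), (5, 4), (6, 5), (8, 8), (4, 6), (3, 8), (3, 6), (2, 6), (1, 6), (0, 10)]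
def moves2 : List (ℕ × ℕ) := [(57, 22), (56, 22), (55, 22), (54, 22), (53, 18), (52, 22), (51, 14), (50, 18), (49, 6), (48, 18), (47, 27), (46, 22), (45, 18), (44, 14), (43, 27), (42, 22), (41, 18), (40, 14), (39, 27), (38, 22), (37, 18), (36, 14), (35, 27), (34, 22), (33, 18), (32, 14), (31, 27), (30, 22), (29, 18), (28, 14), (27, 27), (26, 22), (25, 18), (24, 14), (23, 27), (22, 22), (21, 18), (20, 14), (19, 27), (18, 22), (17, 18), (16, 14), (15, 27), (14, 22), (13, 18), (12, 14), (11, 27), (10, 22), (9, 18), (8, 14), (7, 8), (6, 6), (5, 10), (4, 8), (3, 6), (2, 6), (1, 6), (0, 10)]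

set_option maxRecDepth 20000 in
lemma key1 : braidWord 4 [1, 2, 3, 4, 4, 3, 2, 3, 2, 4, 2, 1, 1, 1, 2, 1, 3, 2, 1, 3, 2, 3, 4, 3, 2, 4, 1, 3, 2, 4, 3, 4, 4, 3, 2, 4, 1, 3, 2, 4, 3, 4, 4, 3, 2, 4, 3, 4, -2, -4, -4, -4, -3, -2, -4, -3, -3, -3, -3, -3, -2, -3, -1, -2, 4, -2, -4, -3, -2, -1, -4, -3, -2, -1, -4, -3, -2, -1, -4, -3, -2, -1, -4, -3, -2, -1, -4, -3, -2, -1, -4, -3, -2, -1, -4, -3, -2, -1, -4, -3, -2, -1, -4, -3, -2, -1, 3, 4, 2, 3, 4, 4, 4, 2] = braidWord 4 [] :=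
  run_sound moves1 (by rfl)

set_option maxRecDepth 20000 in
lemma key2 : braidWord 4 [-2, -4, -4, -4, -3, -2, -4, -3, 1, 2, 3, 4, 1, 2, 3, 4, 1, 2, 3, 4, 1, 2, 3, 4, 1, 2, 3, 4, 1, 2, 3, 4, 1, 2, 3, 4, 1, 2, 3, 4, 1, 2, 3, 4, 1, 2, 3, 4, 2, -4, 2, 1, 3, 2, 3, 3, 3, 3, -3, -3, -3, -3, -2, -3, -1, -2, 4, -2, -4, -3, -2, -1, -4, -3, -2, -1, -4, -3, -2, -1, -4, -3, -2, -1, -4, -3, -2, -1, -4, -3, -2, -1, -4, -3, -2, -1, -4, -3, -2, -1, -4, -3, -2, -1, -4, -3, -2, -1, 3, 4, 2, 3, 4, 4, 4, 2] = braidWord 4 [] :=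
  run_sound moves2 (by rfl)


lemma keyEq : braidWord 4 [1, 2, 3, 4, 4, 3, 2, 3, 2, 4, 2, 1, 1, 1, 2, 1, 3, 2, 1, 3, 2, 3, 4, 3, 2, 4, 1, 3, 2, 4, 3, 4, 4, 3, 2, 4, 1, 3, 2, 4, 3, 4, 4, 3, 2, 4, 3, 4, -2, -4, -4, -4, -3, -2, -4, -3] = braidWord 4 [-2, -4, -4, -4, -3, -2, -4, -3, 1, 2, 3, 4, 1, 2, 3, 4, 1, 2, 3, 4, 1, 2, 3, 4, 1, 2, 3, 4, 1, 2, 3, 4, 1, 2, 3, 4, 1, 2, 3, 4, 1, 2, 3, 4, 1, 2, 3, 4, 2, -4, 2, 1, 3, 2, 3, 3, 3, 3] := by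
  have e1 : braidWord 4 [1, 2, 3, 4, 4, 3, 2, 3, 2, 4, 2, 1, 1, 1, 2, 1, 3, 2, 1, 3, 2, 3, 4, 3, 2, 4, 1, 3, 2, 4, 3, 4, 4, 3, 2, 4, 1, 3, 2, 4, 3, 4, 4, 3, 2, 4, 3, 4, -2, -4, -4, -4, -3, -2, -4, -3] * braidWord 4 [-3, -3, -3, -3, -2, -3, -1, -2, 4, -2, -4, -3, -2, -1, -4, -3, -2, -1, -4, -3, -2, -1, -4, -3, -2, -1, -4, -3, -2, -1, -4, -3, -2, -1, -4, -3, -2, -1, -4, -3, -2, -1, -4, -3, -2, -1, -4, -3, -2, -1, 3, 4, 2, 3, 4, 4, 4, 2] = 1 := by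
    have h := key1
    rwa [show ([1, 2, 3, 4, 4, 3, 2, 3, 2, 4, 2, 1, 1, 1, 2, 1, 3, 2, 1, 3, 2, 3, 4, 3, 2, 4, 1, 3, 2, 4, 3, 4, 4, 3, 2, 4, 1, 3, 2, 4, 3, 4, 4, 3, 2, 4, 3, 4, -2, -4, -4, -4, -3, -2, -4, -3, -3, -3, -3, -3, -2, -3, -1, -2, 4, -2, -4, -3, -2, -1, -4, -3, -2, -1, -4, -3, -2, -1, -4, -3, -2, -1, -4, -3, -2, -1, -4, -3, -2, -1, -4, -3, -2, -1, -4, -3, -2, -1, -4, -3, -2, -1, -4, -3, -2, -1, 3, 4, 2, 3, 4, 4, 4, 2] : List ℤ) = [1, 2, 3, 4, 4, 3, 2, 3, 2, 4, 2, 1, 1, 1, 2, 1, 3, 2, 1, 3, 2, 3, 4, 3, 2, 4, 1, 3, 2, 4, 3, 4, 4, 3, 2, 4, 1, 3, 2, 4, 3, 4, 4, 3, 2, 4, 3, 4, -2, -4, -4, -4, -3, -2, -4, -3] ++ [-3, -3, -3, -3, -2, -3, -1, -2, 4, -2, -4, -3, -2, -1, -4, -3, -2, -1, -4, -3, -2,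 -1, -4, -3, -2, -1, -4, -3, -2, -1, -4, -3, -2, -1, -4, -3, -2, -1, -4, -3, -2, -1, -4, -3, -2, -1, -4, -3, -2, -1, 3, 4, 2, 3, 4, 4, 4, 2] by simp, bw_append, bw_nil] at h
  have e2 : braidWord 4 [-2, -4, -4, -4, -3, -2, -4, -3, 1, 2, 3, 4, 1, 2, 3, 4, 1, 2, 3, 4, 1, 2, 3, 4, 1, 2, 3, 4, 1, 2, 3, 4, 1, 2, 3, 4, 1, 2, 3, 4, 1, 2, 3, 4, 1, 2, 3, 4, 2, -4, 2, 1, 3, 2, 3, 3, 3, 3] * braidWord 4 [-3, -3, -3, -3, -2, -3, -1, -2, 4, -2, -4, -3, -2, -1, -4, -3, -2, -1, -4, -3, -2, -1, -4, -3, -2, -1, -4, -3, -2, -1, -4, -3, -2, -1, -4, -3, -2, -1, -4, -3, -2, -1, -4, -3, -2, -1, -4, -3, -2, -1, 3, 4, 2, 3, 4, 4, 4, 2] = 1 := by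
    have h := key2
    rwa [show ([-2, -4, -4, -4, -3, -2, -4, -3, 1, 2, 3, 4, 1, 2, 3, 4, 1, 2, 3, 4, 1, 2, 3, 4, 1, 2, 3, 4, 1, 2, 3, 4, 1, 2, 3, 4, 1, 2, 3, 4, 1, 2, 3, 4, 1, 2, 3, 4, 2, -4, 2, 1, 3, 2, 3, 3, 3, 3, -3, -3, -3, -3, -2, -3, -1, -2, 4, -2, -4, -3, -2, -1, -4, -3, -2, -1, -4, -3, -2, -1, -4, -3, -2, -1, -4, -3, -2, -1, -4, -3, -2, -1, -4, -3, -2, -1, -4, -3, -2, -1, -4, -3, -2, -1, -4, -3, -2, -1, 3, 4, 2, 3, 4, 4, 4, 2] : List ℤ) = [-2, -4, -4, -4, -3, -2, -4, -3, 1, 2, 3, 4, 1, 2, 3, 4, 1, 2, 3, 4, 1, 2, 3, 4, 1, 2, 3, 4, 1, 2, 3, 4, 1, 2, 3, 4, 1, 2, 3, 4, 1, 2, 3, 4, 1, 2, 3, 4, 2, -4, 2, 1, 3, 2, 3, 3, 3, 3] ++ [-3, -3, -3, -3, -2, -3, -1, -2, 4, -2, -4, -3, -2, -1, -4, -3, -2,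 -1, -4, -3, -2, -1, -4, -3, -2, -1, -4, -3, -2, -1, -4, -3, -2, -1, -4, -3, -2, -1, -4, -3, -2, -1, -4, -3, -2, -1, -4, -3, -2, -1, 3, 4, 2, 3, 4, 4, 4, 2] by simp, bw_append, bw_nil] at h
  have h3 : braidWord 4 [-3, -3, -3, -3, -2, -3, -1, -2, 4, -2, -4, -3, -2, -1, -4, -3, -2, -1, -4, -3, -2, -1, -4, -3, -2, -1, -4, -3, -2, -1, -4, -3, -2, -1, -4, -3, -2, -1, -4, -3, -2, -1, -4, -3, -2, -1, -4, -3, -2, -1, 3, 4, 2, 3, 4, 4, 4, 2] = (braidWord 4 [-2, -4, -4, -4, -3, -2, -4, -3, 1, 2, 3, 4, 1, 2, 3, 4, 1, 2, 3, 4, 1, 2, 3, 4, 1, 2, 3, 4, 1, 2, 3, 4, 1, 2, 3, 4, 1, 2, 3, 4, 1, 2, 3, 4, 1, 2, 3, 4, 2, -4, 2, 1, 3, 2, 3, 3, 3, 3])⁻¹ := eq_inv_of_mul_eq_one_right e2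
  rw [h3] at e1
  exact mul_inv_eq_one.mp e1

theorem stmt2
    (γ α : BraidGroup 4)
    (hγ : γ = braidWord 4
      [1, 2, 3, 4, 4, 3, 2, 3, 2, 4, 2, 1, 1, 1, 2, 1, 3, 2, 1, 3, 2, 3, 4, 3, 2, 4, 1, 3, 2,
      4, 3, 4, 4, 3, 2, 4, 1, 3, 2, 4, 3, 4, 4, 3, 2, 4, 3, 4])
    (hα : α = braidWord 4
      [-2, -4, -4, -4, -3, -2, -4, -3]) :
    α⁻¹ * γ * α = braidWord 4
      [1, 2, 3, 4, 1, 2, 3, 4, 1, 2, 3, 4, 1, 2, 3, 4, 1, 2, 3, 4, 1, 2, 3, 4, 1, 2, 3, 4, 1,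
      2, 3, 4, 1, 2, 3, 4, 1, 2, 3, 4, 2, -4, 2, 1, 3, 2, 3, 3, 3, 3] := by
  subst hγ hα
  have hga : braidWord 4 [1, 2, 3, 4, 4, 3, 2, 3, 2, 4, 2, 1, 1, 1, 2, 1, 3, 2, 1, 3, 2, 3, 4, 3, 2, 4, 1, 3, 2, 4, 3, 4, 4, 3, 2, 4, 1, 3, 2, 4, 3, 4, 4, 3, 2, 4, 3, 4] * braidWord 4 [-2, -4, -4, -4, -3, -2, -4, -3] =
      braidWord 4 [-2, -4, -4, -4, -3, -2, -4, -3] * braidWord 4 [1, 2, 3, 4, 1, 2, 3, 4, 1, 2, 3, 4, 1, 2, 3, 4, 1, 2, 3, 4, 1, 2, 3, 4, 1, 2, 3, 4, 1, 2, 3, 4, 1, 2, 3, 4, 1, 2, 3, 4, 2, -4, 2, 1, 3, 2, 3, 3, 3, 3] := by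
    rw [← bw_append, ← bw_append]
    have h := keyEq
    rwa [show ([1, 2, 3, 4, 4, 3, 2, 3, 2, 4, 2, 1, 1, 1, 2, 1, 3, 2, 1, 3, 2, 3, 4, 3, 2, 4, 1, 3, 2, 4, 3, 4, 4, 3, 2, 4, 1, 3, 2, 4, 3, 4, 4, 3, 2, 4, 3, 4, -2, -4, -4, -4, -3, -2, -4, -3] : List ℤ) = [1, 2, 3, 4, 4, 3, 2, 3, 2, 4, 2, 1, 1, 1, 2, 1, 3, 2, 1, 3, 2, 3, 4, 3, 2, 4, 1, 3, 2, 4, 3, 4, 4, 3, 2, 4, 1, 3, 2, 4, 3, 4, 4, 3, 2, 4, 3, 4] ++ [-2, -4, -4, -4, -3, -2, -4, -3] by simp,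
         show ([-2, -4, -4, -4, -3, -2, -4, -3, 1, 2, 3, 4, 1, 2, 3, 4, 1, 2, 3, 4, 1, 2, 3, 4, 1, 2, 3, 4, 1, 2, 3, 4, 1, 2, 3, 4, 1, 2, 3, 4, 1, 2, 3, 4, 1, 2, 3, 4, 2, -4, 2, 1, 3, 2, 3, 3, 3, 3] : List ℤ) = [-2, -4, -4, -4, -3, -2, -4, -3] ++ [1, 2, 3, 4, 1, 2, 3, 4, 1, 2, 3, 4, 1, 2, 3, 4, 1, 2, 3, 4, 1, 2, 3, 4, 1, 2, 3, 4, 1, 2, 3, 4, 1, 2, 3, 4, 1, 2, 3, 4, 2, -4, 2, 1, 3, 2, 3, 3, 3, 3] by simp] at h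
  rw [mul_assoc, hga, ← mul_assoc, inv_mul_cancel, one_mul]
end

section
/- In the braid group B_6, let β = [(1,2,3,4,5)^6, 4,3,2,1, (1,2,3,4,5)^2, 5,1,2,3,4,5,5,4,3] and α = [4,1,3,2,1,-5,-4,2,1,2]. Then α⁻¹·β·α = [(1,2,3,4,5)^12, -4,-3,-2,-5,-4,-3,1,2,-5,-5,-4]. -/
/-! ### Auxiliary machinery: subword reversing -/

section Aux

lemma braidWord_nil : braidWord 5 [] = 1 := rfl

lemma braidWord_cons (a : ℤ) (l : List ℤ) :
    braidWord 5 (a :: l) = braidLetter 5 a * braidWord 5 l := by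
  simp [braidWord]

lemma braidWord_append (l₁ l₂ : List ℤ) :
    braidWord 5 (l₁ ++ l₂) = braidWord 5 l₁ * braidWord 5 l₂ := by
  simp [braidWord]

lemma braidLetter_neg (a : ℤ) (ha : a ≠ 0) :
    braidLetter 5 (-a) = (braidLetter 5 a)⁻¹ := by
  unfold braidLetter
  rw [Int.natAbs_neg]
  by_cases h : a.natAbs - 1 < 5
  · rw [dif_pos h, dif_pos h]
    rcases lt_or_gt_of_ne ha with h1 | h1
    · rw [if_pos (by omega), if_neg (by omega)]
      simp
    · rw [if_neg (by omega), if_pos (by omega)]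
      simp
  · rw [dif_neg h, dif_neg h]; simp

/-- `invList l` represents the inverse of `l` (when `l` has no zero letters). -/
def invList (l : List ℤ) : List ℤ := (l.map (fun a => -a)).reverse

lemma braidWord_invList (l : List ℤ) (h : ∀ a ∈ l, a ≠ 0) :
    braidWord 5 (invList l) = (braidWord 5 l)⁻¹ := by
  induction l with
  | nil => simp [invList, braidWord_nil]
  | cons a l ih =>
      have hl : ∀ b ∈ l, b ≠ 0 := fun b hb => h b (List.mem_cons_of_mem a hb)
      have ha : a ≠ 0 := h a List.mem_cons_self
      have : invList (a :: l) = invList l ++ [-a] := by simp [invList]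
      rw [this, braidWord_append, ih hl, braidWord_cons a l, braidWord_cons,
        braidWord_nil, braidLetter_neg a ha, mul_one, mul_inv_rev]

lemma rel_one {r : FreeGroup (Fin 5)} (h : r ∈ braidRels 5) :
    PresentedGroup.mk (braidRels 5) r = 1 :=
  (QuotientGroup.eq_one_iff r).mpr (Subgroup.subset_normalClosure h)

lemma braid_rel1 (i j : Fin 5) (h : (i : ℕ) + 1 = j) :
    braidGen i * braidGen j * braidGen i = braidGen j * braidGen i * braidGen j := by
  have h0 := rel_one (Or.inl ⟨i, j, h, rfl⟩)
  simp only [map_mul, map_inv] at h0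
  have := mul_inv_eq_one.mp h0
  exact this

lemma braid_rel2 (i j : Fin 5) (h : (i : ℕ) + 2 ≤ (j : ℕ)) :
    braidGen i * braidGen j = braidGen j * braidGen i := by
  have h0 := rel_one (Or.inr ⟨i, j, h, rfl⟩)
  simp only [map_mul, map_inv] at h0
  exact mul_inv_eq_one.mp h0

lemma conj_of_braid {G : Type*} [Group G] (x y : G) (h : x * y * x = y * x * y) :
    x⁻¹ * y = y * x * y⁻¹ * x⁻¹ := by
  have e1 : x * (y * x * y⁻¹ * x⁻¹) = y := by
    rw [show x * (y * x * y⁻¹ * x⁻¹) = (x * y * x) * (y⁻¹ * x⁻¹) by group, h]; group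
  have e2 : x * (x⁻¹ * y) = y := by group
  exact mul_left_cancel (e2.trans e1.symm)

lemma braidLetter_pos (b : ℤ) (i : Fin 5) (h1 : 0 < b) (hi : b.natAbs - 1 = (i : ℕ)) :
    braidLetter 5 b = braidGen i := by
  have hlt : b.natAbs - 1 < 5 := by have := i.isLt; omega
  unfold braidLetter
  rw [dif_pos hlt]
  have hfin : (⟨b.natAbs - 1, hlt⟩ : Fin 5) = i := Fin.ext hi
  rw [hfin, if_pos h1, zpow_one]

lemma braidLetter_negg (a : ℤ) (i : Fin 5) (h1 : a < 0) (hi : a.natAbs - 1 = (i : ℕ)) :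
    braidLetter 5 a = (braidGen i)⁻¹ := by
  have hlt : a.natAbs - 1 < 5 := by have := i.isLt; omega
  unfold braidLetter
  rw [dif_pos hlt]
  have hfin : (⟨a.natAbs - 1, hlt⟩ : Fin 5) = i := Fin.ext hi
  rw [hfin, if_neg (by omega), zpow_neg_one]

/-- One leftmost subword-reversing step. -/
def rstep : List ℤ → List ℤ
  | [] => []
  | [a] => [a]
  | a :: b :: t =>
    if a < 0 ∧ 0 < b ∧ -a ≤ 5 ∧ b ≤ 5 then
      (if -a = b then t
       else if b + 2 ≤ -a ∨ -a + 2 ≤ b then b :: a :: t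
       else b :: (-a) :: (-b) :: a :: t)
    else a :: rstep (b :: t)

lemma pair_cancel (a b : ℤ) (h1 : a < 0) (h2 : 0 < b) (h3 : -a ≤ 5) (h4 : b ≤ 5)
    (hb : -a = b) : braidLetter 5 a * braidLetter 5 b = 1 := by
  have hia : a.natAbs - 1 < 5 := by omega
  rw [braidLetter_negg a ⟨a.natAbs - 1, hia⟩ h1 rfl,
    braidLetter_pos b ⟨a.natAbs - 1, hia⟩ h2 (by simp only; omega), inv_mul_cancel]

lemma pair_comm (a b : ℤ) (h1 : a < 0) (h2 : 0 < b) (h3 : -a ≤ 5) (h4 : b ≤ 5)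
    (hfar : b + 2 ≤ -a ∨ -a + 2 ≤ b) :
    braidLetter 5 a * braidLetter 5 b = braidLetter 5 b * braidLetter 5 a := by
  have hia : a.natAbs - 1 < 5 := by omega
  have hib : b.natAbs - 1 < 5 := by omega
  set i : Fin 5 := ⟨a.natAbs - 1, hia⟩ with hidef
  set j : Fin 5 := ⟨b.natAbs - 1, hib⟩ with hjdef
  rw [braidLetter_negg a i h1 rfl, braidLetter_pos b j h2 rfl]
  have hc : Commute (braidGen i) (braidGen j) := by
    rcases hfar with hf | hf
    · have := braid_rel2 j i (by simp only [hidef, hjdef]; omega)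
      exact (Commute.symm this)
    · exact braid_rel2 i j (by simp only [hidef, hjdef]; omega)
  exact hc.inv_left.eq

lemma pair_adj (a b : ℤ) (h1 : a < 0) (h2 : 0 < b) (h3 : -a ≤ 5) (h4 : b ≤ 5)
    (hadj : -a = b + 1 ∨ b = -a + 1) :
    braidLetter 5 a * braidLetter 5 b =
      braidLetter 5 b * braidLetter 5 (-a) * braidLetter 5 (-b) * braidLetter 5 a := by
  have hia : a.natAbs - 1 < 5 := by omega
  have hib : b.natAbs - 1 < 5 := by omega
  set i : Fin 5 := ⟨a.natAbs - 1, hia⟩ with hidef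
  set j : Fin 5 := ⟨b.natAbs - 1, hib⟩ with hjdef
  rw [braidLetter_negg a i h1 rfl, braidLetter_pos b j h2 rfl,
    braidLetter_pos (-a) i (by omega) (by simp only [hidef, Int.natAbs_neg]),
    braidLetter_negg (-b) j (by omega) (by simp only [hjdef, Int.natAbs_neg])]
  set x := braidGen i
  set y := braidGen j
  have hx : x * y * x = y * x * y := by
    rcases hadj with ha | ha
    · exact (braid_rel1 j i (by simp only [hidef, hjdef]; omega)).symm
    · exact braid_rel1 i j (by simp only [hidef, hjdef]; omega)
  exact conj_of_braid x y hx

lemma rstep_sound : ∀ l : List ℤ, braidWord 5 (rstep l) = braidWord 5 l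
  | [] => rfl
  | [a] => rfl
  | a :: b :: t => by
    rw [rstep]
    by_cases h : a < 0 ∧ 0 < b ∧ -a ≤ 5 ∧ b ≤ 5
    · obtain ⟨h1, h2, h3, h4⟩ := h
      rw [if_pos ⟨h1, h2, h3, h4⟩]
      by_cases he : -a = b
      · rw [if_pos he, braidWord_cons, braidWord_cons, ← mul_assoc,
          pair_cancel a b h1 h2 h3 h4 he, one_mul]
      · rw [if_neg he]
        by_cases hf : b + 2 ≤ -a ∨ -a + 2 ≤ b
        · rw [if_pos hf]
          simp only [braidWord_cons, ← mul_assoc]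
          rw [← pair_comm a b h1 h2 h3 h4 hf]
        · rw [if_neg hf]
          have hadj : -a = b + 1 ∨ b = -a + 1 := by omega
          simp only [braidWord_cons, ← mul_assoc]
          rw [← pair_adj a b h1 h2 h3 h4 hadj]
    · rw [if_neg h, braidWord_cons, braidWord_cons, rstep_sound (b :: t)]

/-- Iterate `rstep`. -/
def revN : ℕ → List ℤ → List ℤ
  | 0, l => l
  | n + 1, l => revN n (rstep l)

lemma revN_sound : ∀ (n : ℕ) (l : List ℤ), braidWord 5 (revN n l) = braidWord 5 l
  | 0, _ => rfl
  | n + 1, l => by rw [revN, revN_sound n (rstep l), rstep_sound l]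

end Aux

section Words

def wP : List ℤ := [4, 5, 3, 2, 1, 4, 3, 2, 5, 4, 3, 1, 2, 3, 4, 1, 2, 3, 4, 1, 2, 3, 4, 5, 4, 3, 2, 1, 1, 2, 3, 4, 5, 1, 2, 3, 4, 5, 5, 1, 2, 3, 4, 5, 5, 4, 3, 4, 1, 3, 2, 1, 2, 1, 2, 5, 3, 2, 4, 3, 5, 4, 1, 2, 3]

def wQ : List ℤ := [1, 2, 3, 4, 5, 1, 2, 3, 4, 5, 1, 2, 3, 4, 5, 1, 2, 3, 4, 5, 1, 2, 3, 4, 5, 1, 2, 3, 4, 5, 1, 2, 3, 4, 5, 1, 2, 3, 4, 5, 1, 2, 3, 4, 5, 1, 2, 3, 4, 5, 1, 2, 3, 4, 5, 1, 2, 3, 4, 5, 1, 2, 3, 4, 5]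

def wA : List ℤ := [4, 1, 3, 2, 1, -5, -4, 2, 1, 2]

def wG : List ℤ := [1, 2, 3, 4, 5, 1, 2, 3, 4, 5, 1, 2, 3, 4, 5, 1, 2, 3, 4, 5, 1, 2, 3, 4, 5, 1, 2, 3, 4, 5, 4, 3, 2, 1, 1, 2, 3, 4, 5, 1, 2, 3, 4, 5, 5, 1, 2, 3, 4, 5, 5, 4, 3]

def wD : List ℤ := [1, 2, 3, 4, 5, 1, 2, 3, 4, 5, 1, 2, 3, 4, 5, 1, 2, 3, 4, 5, 1, 2, 3, 4, 5, 1, 2, 3, 4, 5, 1, 2, 3, 4, 5, 1, 2, 3, 4, 5, 1, 2, 3, 4, 5, 1, 2, 3, 4, 5, 1, 2, 3, 4, 5, 1, 2, 3, 4, 5, -4, -3, -2, -5, -4, -3, 1, 2, -5, -5, -4]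

set_option maxRecDepth 400000 in
lemma phase2 : braidWord 5 wP = braidWord 5 wQ := by
  have h1 : revN 426 (invList wP ++ wQ) = [] := by decide
  have h2 : braidWord 5 (invList wP ++ wQ) = 1 := by
    rw [← revN_sound 426 (invList wP ++ wQ), h1, braidWord_nil]
  rw [braidWord_append, braidWord_invList wP (by decide)] at h2
  exact inv_mul_eq_one.mp h2

set_option maxRecDepth 400000 in
lemma phase1 :
    braidWord 5 (invList wA ++ wG ++ wA ++ invList wD) = 1 := by
  have h1 : revN 146 (invList wA ++ wG ++ wA ++ invList wD) = wP ++ invList wQ := by decide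
  have h2 : braidWord 5 (invList wA ++ wG ++ wA ++ invList wD)
      = braidWord 5 wP * (braidWord 5 wQ)⁻¹ := by
    rw [← revN_sound 146 (invList wA ++ wG ++ wA ++ invList wD), h1, braidWord_append,
      braidWord_invList wQ (by decide)]
  rw [h2, phase2, mul_inv_cancel]

end Words

set_option maxRecDepth 100000 in
lemma stmt9_aux
    (γ α : BraidGroup 5)
    (hγ : γ = braidWord 5
      [1, 2, 3, 4, 5, 1, 2, 3, 4, 5, 1, 2, 3, 4, 5, 1, 2, 3, 4, 5, 1, 2, 3, 4, 5, 1, 2, 3, 4,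
      5, 4, 3, 2, 1, 1, 2, 3, 4, 5, 1, 2, 3, 4, 5, 5, 1, 2, 3, 4, 5, 5, 4, 3])
    (hα : α = braidWord 5
      [4, 1, 3, 2, 1, -5, -4, 2, 1, 2]) :
    α⁻¹ * γ * α = braidWord 5
      [1, 2, 3, 4, 5, 1, 2, 3, 4, 5, 1, 2, 3, 4, 5, 1, 2, 3, 4, 5, 1, 2, 3, 4, 5, 1, 2, 3, 4,
      5, 1, 2, 3, 4, 5, 1, 2, 3, 4, 5, 1, 2, 3, 4, 5, 1, 2, 3, 4, 5, 1, 2, 3, 4, 5, 1, 2, 3, 4,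
      5, -4, -3, -2, -5, -4, -3, 1, 2, -5, -5, -4] := by
  have key := phase1
  rw [braidWord_append, braidWord_append, braidWord_append,
    braidWord_invList wA (by decide), braidWord_invList wD (by decide)] at key
  have hγ' : braidWord 5 wG = γ := hγ.symm
  have hα' : braidWord 5 wA = α := hα.symm
  rw [hγ', hα'] at key
  exact mul_inv_eq_one.mp key


theorem stmt9
    (γ α : BraidGroup 5)
    (hγ : γ = braidWord 5
      [1, 2, 3, 4, 5, 1, 2, 3, 4, 5, 1, 2, 3, 4, 5, 1, 2, 3, 4, 5, 1, 2, 3, 4, 5, 1, 2, 3, 4,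
      5, 4, 3, 2, 1, 1, 2, 3, 4, 5, 1, 2, 3, 4, 5, 5, 1, 2, 3, 4, 5, 5, 4, 3])
    (hα : α = braidWord 5
      [4, 1, 3, 2, 1, -5, -4, 2, 1, 2]) :
    α⁻¹ * γ * α = braidWord 5
      [1, 2, 3, 4, 5, 1, 2, 3, 4, 5, 1, 2, 3, 4, 5, 1, 2, 3, 4, 5, 1, 2, 3, 4, 5, 1, 2, 3, 4,
      5, 1, 2, 3, 4, 5, 1, 2, 3, 4, 5, 1, 2, 3, 4, 5, 1, 2, 3, 4, 5, 1, 2, 3, 4, 5, 1, 2, 3, 4,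
      5, -4, -3, -2, -5, -4, -3, 1, 2, -5, -5, -4] :=
  stmt9_aux γ α hγ hα
end
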